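/- Let (H_φ, J_φ) be a Krein space (J_φ bounded with J_φ = J_φ* = J_φ⁻¹), π_φ a J_φ-unitary representation of G on H_φ (π_φ(g⁻¹) = J_φ π_φ(g)* J_φ, π_φ(e) = id), and V_φ : H → H_φ bounded. Then the following are equivalent: (i) J_φ π_φ(g) V_φ = π_φ(α(g)) V_φ for all g ∈ G; (ii) V_φ* π_φ(g)* π_φ(g') V_φ = V_φ* π_φ(α(g⁻¹)g') V_φ for all g, g' ∈ G and J_φ V_φ = V_φ. (For (ii) ⇒ (i), additionally assume the closed span of π_φ(G)V_φ H is all of H_φ.) -/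

import Mathlib

open scoped ComplexOrder

noncomputable section

def IsInvolution (G : Type*) [Group G] (α : G → G) : Prop :=
  (∀ g, α (α g) = g) ∧ α 1 = 1 ∧ ∀ g : G, α g⁻¹ = (α g)⁻¹

def IsAlphaCP {G : Type*} [Group G] (α : G → G)
    {H : Type*} [NormedAddCommGroup H] [InnerProductSpace ℂ H] [CompleteSpace H]
    (φ : G → H →L[ℂ] H) : Prop :=
  (∀ g₁ g₂ : G, φ (α g₁ * α g₂) = φ (α (g₁ * g₂)) ∧ φ (α (g₁ * g₂)) = φ (g₁ * g₂)) ∧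
  (∀ (n : ℕ) (g : Fin n → G) (ξ : Fin n → H),
    0 ≤ ∑ i, ∑ j, (inner ℂ (φ ((α (g i))⁻¹ * g j) (ξ j)) (ξ i) : ℂ)) ∧
  (∃ K > (0 : ℝ), ∀ (n : ℕ) (g : Fin n → G) (ξ : Fin n → H),
    ∑ i, ∑ j, (inner ℂ (((ContinuousLinearMap.adjoint (φ (g i))) ∘L φ (g j)) (ξ j)) (ξ i) : ℂ) ≤
      (K : ℂ) * ∑ i, ∑ j, (inner ℂ (φ ((α (g i))⁻¹ * g j) (ξ j)) (ξ i) : ℂ)) ∧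
  (∀ g : G, ∃ M > (0 : ℝ), ∀ (n : ℕ) (gs : Fin n → G) (ξ : Fin n → H),
    ∑ i, ∑ j, (inner ℂ (φ ((α (g * gs i))⁻¹ * (g * gs j)) (ξ j)) (ξ i) : ℂ) ≤
      (M : ℂ) * ∑ i, ∑ j, (inner ℂ (φ ((α (gs i))⁻¹ * gs j) (ξ j)) (ξ i) : ℂ))

open ContinuousLinearMap in
theorem krein_intertwine_iff {G : Type*} [Group G] (α : G → G)
    {H : Type*} [NormedAddCommGroup H] [InnerProductSpace ℂ H] [CompleteSpace H]
    {K : Type*} [NormedAddCommGroup K] [InnerProductSpace ℂ K] [CompleteSpace K]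
    (hα : IsInvolution G α)
    (J : K →L[ℂ] K) (hJsa : adjoint J = J) (hJinv : J ∘L J = 1)
    (π : G → K →L[ℂ] K) (hπ1 : π 1 = 1) (hπmul : ∀ g g', π (g * g') = π g ∘L π g')
    (hπJ : ∀ g : G, π g⁻¹ = J ∘L adjoint (π g) ∘L J)
    (V : H →L[ℂ] K) :
    ((∀ g : G, J ∘L π g ∘L V = π (α g) ∘L V) →
      ((∀ g g' : G, adjoint V ∘L adjoint (π g) ∘L π g' ∘L V =
          adjoint V ∘L π (α g⁻¹ * g') ∘L V) ∧ J ∘L V = V)) ∧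
    ((Submodule.span ℂ {x : K | ∃ g ξ, x = π g (V ξ)}).topologicalClosure = ⊤ →
      ((∀ g g' : G, adjoint V ∘L adjoint (π g) ∘L π g' ∘L V =
          adjoint V ∘L π (α g⁻¹ * g') ∘L V) ∧ J ∘L V = V) →
      ∀ g : G, J ∘L π g ∘L V = π (α g) ∘L V) := by
  obtain ⟨hα2, hα1, hαinv⟩ := hα
  have hJJ : ∀ x : K, J (J x) = x := by
    intro x
    have := ContinuousLinearMap.ext_iff.mp hJinv x
    simpa using this
  have hJinner : ∀ x y : K, (inner ℂ (J x) y : ℂ) = inner ℂ x (J y) := by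
    intro x y
    rw [← adjoint_inner_left J, hJsa]
  have hπadjpt : ∀ (g : G) (x : K), adjoint (π g) x = J (π g⁻¹ (J x)) := by
    intro g x
    rw [hπJ g]
    simp [hJJ]
  have hπinvpt : ∀ (g : G) (x : K), π g⁻¹ x = J (adjoint (π g) (J x)) := by
    intro g x
    rw [hπJ g]
    rfl
  constructor
  · intro h
    have hpt : ∀ (g : G) (x : H), J (π g (V x)) = π (α g) (V x) := by
      intro g x
      have := ContinuousLinearMap.ext_iff.mp (h g) x
      simpa using this
    have hJV : J ∘L V = V := by
      ext x
      have := hpt 1 x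
      rw [hπ1, hα1, hπ1] at this
      simpa using this
    have hJVpt : ∀ x, J (V x) = V x := fun x => by
      have := ContinuousLinearMap.ext_iff.mp hJV x
      simpa using this
    refine ⟨?_, hJV⟩
    intro g g'
    ext ξ
    apply ext_inner_left ℂ
    intro η
    calc (inner ℂ η ((adjoint V ∘L adjoint (π g) ∘L π g' ∘L V) ξ) : ℂ)
        = inner ℂ (π g (V η)) (π g' (V ξ)) := by
          simp only [ContinuousLinearMap.comp_apply, adjoint_inner_right]
      _ = inner ℂ (J (π g (V η))) (J (π g' (V ξ))) := by rw [hJinner, hJJ]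
      _ = inner ℂ (π (α g) (V η)) (π (α g') (V ξ)) := by rw [hpt, hpt]
      _ = inner ℂ (V η) (adjoint (π (α g)) (π (α g') (V ξ))) :=
          (adjoint_inner_right _ _ _).symm
      _ = inner ℂ (V η) (J (π (α g⁻¹) (J (π (α g') (V ξ))))) := by
          rw [hπadjpt, ← hαinv]
      _ = inner ℂ (V η) (J (π (α g⁻¹) (π g' (V ξ)))) := by rw [hpt, hα2]
      _ = inner ℂ (V η) (J (π (α g⁻¹ * g') (V ξ))) := by rw [hπmul]; rfl
      _ = inner ℂ (J (V η)) (π (α g⁻¹ * g') (V ξ)) := (hJinner _ _).symm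
      _ = inner ℂ η ((adjoint V ∘L π (α g⁻¹ * g') ∘L V) ξ) := by
          rw [hJVpt]
          simp only [ContinuousLinearMap.comp_apply, adjoint_inner_right]
  · rintro hdense ⟨hii, hJV⟩ g
    have hJVpt : ∀ x, J (V x) = V x := fun x => by
      have := ContinuousLinearMap.ext_iff.mp hJV x
      simpa using this
    have h2 : α ((α g)⁻¹) = g⁻¹ := by rw [← hαinv]; exact hα2 _
    ext ξ
    simp only [ContinuousLinearMap.comp_apply]
    have hmem : J (π g (V ξ)) - π (α g) (V ξ) ∈
        (Submodule.span ℂ {x : K | ∃ g ξ, x = π g (V ξ)})ᗮ := by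
      rw [Submodule.mem_orthogonal]
      intro u hu
      induction hu using Submodule.span_induction with
      | mem x hx =>
        obtain ⟨g', η, rfl⟩ := hx
        rw [inner_sub_right, sub_eq_zero]
        have h1 := hii (α g) g'
        rw [h2] at h1
        have h1pt : ∀ a b : H, (inner ℂ (π (α g) (V a)) (π g' (V b)) : ℂ) =
            inner ℂ (V a) (π (g⁻¹ * g') (V b)) := by
          intro a b
          have := congrArg
            (fun (T : H →L[ℂ] H) => (inner ℂ a (T b) : ℂ)) h1
          simpa only [ContinuousLinearMap.comp_apply, adjoint_inner_right] using this
        calc (inner ℂ (π g' (V η)) (J (π g (V ξ))) : ℂ)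
            = inner ℂ (J (π g' (V η))) (π g (V ξ)) := by rw [hJinner]
          _ = inner ℂ (adjoint (π g'⁻¹) (V η)) (π g (V ξ)) := by
              rw [hπadjpt, inv_inv, hJVpt]
          _ = inner ℂ (V η) (π g'⁻¹ (π g (V ξ))) := adjoint_inner_left _ _ _
          _ = inner ℂ (V η) (π (g'⁻¹ * g) (V ξ)) := by rw [hπmul]; rfl
          _ = inner ℂ (V η) (π ((g⁻¹ * g')⁻¹) (V ξ)) := by rw [mul_inv_rev, inv_inv]
          _ = inner ℂ (V η) (J (adjoint (π (g⁻¹ * g')) (J (V ξ)))) := by rw [hπinvpt]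
          _ = inner ℂ (J (V η)) (adjoint (π (g⁻¹ * g')) (J (V ξ))) := (hJinner _ _).symm
          _ = inner ℂ (π (g⁻¹ * g') (V η)) (V ξ) := by
              rw [hJVpt, hJVpt, adjoint_inner_right]
          _ = starRingEnd ℂ (inner ℂ (V ξ) (π (g⁻¹ * g') (V η))) := by
              rw [inner_conj_symm]
          _ = starRingEnd ℂ (inner ℂ (π (α g) (V ξ)) (π g' (V η))) := by rw [h1pt]
          _ = inner ℂ (π g' (V η)) (π (α g) (V ξ)) := inner_conj_symm _ _
      | zero => simp
      | add x y hx hy ihx ihy => rw [inner_add_left, ihx, ihy, add_zero]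
      | smul a x hx ih => rw [inner_smul_left, ih, mul_zero]
    rw [Submodule.topologicalClosure_eq_top_iff.mp hdense, Submodule.mem_bot] at hmem
    exact sub_eq_zero.mp hmem
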